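/- Let A be an m×n real matrix. Then: (a) the orthogonal complement of {K A : K skew-symmetric m×m} in ℝ^{m×n} (with inner product ⟨M,N⟩ = tr(Mᵀ N)) is {X : X Aᵀ is symmetric}; (b) the orthogonal complement of {A L : L skew-symmetric n×n} is {X : Aᵀ X is symmetric}; and consequently A has the SSVP if and only if {K A : K skew} + {A L : L skew} + Span{E_{ij} : A_{ij} ≠ 0} = ℝ^{m×n}. -/

import Mathlib

open Matrix

/-- The strong singular value property. -/
def HasSSVP {m n : Type*} [Fintype m] [Fintype n] (A : Matrix m n ℝ) : Prop :=
  ∀ X : Matrix m n ℝ,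
    (X * Aᵀ).IsSymm → (Aᵀ * X).IsSymm → (∀ i j, A i j ≠ 0 → X i j = 0) → X = 0

lemma trace_tmul {m n : Type*} [Fintype m] [Fintype n] (M N : Matrix m n ℝ) :
    Matrix.trace (Mᵀ * N) = ∑ p : m × n, M p.1 p.2 * N p.1 p.2 := by
  simp [Matrix.trace, Matrix.mul_apply, Matrix.diag, Fintype.sum_prod_type]
  rw [Finset.sum_comm]

lemma zero_of_tr {m n : Type*} [Fintype m] [Fintype n] (M : Matrix m n ℝ)
    (h : Matrix.trace (Mᵀ * M) = 0) : M = 0 := by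
  rw [trace_tmul] at h
  ext i j
  have := (Finset.sum_eq_zero_iff_of_nonneg (fun p _ => mul_self_nonneg _)).mp h (i, j)
    (Finset.mem_univ _)
  simpa using mul_self_eq_zero.mp this

lemma skew_pairing {k : Type*} [Fintype k] (S : Matrix k k ℝ) :
    (∀ K : Matrix k k ℝ, Kᵀ = -K → Matrix.trace (Kᵀ * S) = 0) ↔ S.IsSymm := by
  constructor
  · intro h
    have hK : (S - Sᵀ)ᵀ = -(S - Sᵀ) := by
      rw [transpose_sub, transpose_transpose]; abel
    have h1 := h (S - Sᵀ) hK
    have key : Matrix.trace ((S - Sᵀ)ᵀ * (S - Sᵀ)) = 0 := by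
      have e1 : Matrix.trace (Sᵀ * Sᵀ) = Matrix.trace (S * S) := by
        rw [← Matrix.trace_transpose (S * S), transpose_mul]
      have e2 : Matrix.trace (S * Sᵀ) = Matrix.trace (Sᵀ * S) := Matrix.trace_mul_comm _ _
      simp only [transpose_sub, transpose_transpose, Matrix.sub_mul, Matrix.mul_sub,
        Matrix.trace_sub] at h1 ⊢
      linarith
    have h0 : S - Sᵀ = 0 := zero_of_tr _ key
    rw [sub_eq_zero] at h0
    exact h0.symm
  · intro hS K hK
    have h1 : Matrix.trace (Kᵀ * S) = Matrix.trace (K * S) := by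
      rw [← Matrix.trace_transpose (Kᵀ * S), transpose_mul, transpose_transpose, hS.eq,
        Matrix.trace_mul_comm]
    have h2 : Matrix.trace (Kᵀ * S) = -Matrix.trace (K * S) := by
      rw [hK]; simp
    linarith

noncomputable def matE (m n : ℕ) :
    Matrix (Fin m) (Fin n) ℝ ≃ₗ[ℝ] EuclideanSpace ℝ (Fin m × Fin n) where
  toFun M := WithLp.toLp 2 (fun p : Fin m × Fin n => M p.1 p.2)
  invFun v := Matrix.of fun i j => v (i, j)
  map_add' _ _ := rfl
  map_smul' _ _ := rfl
  left_inv _ := rfl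
  right_inv _ := rfl

lemma inner_matE (m n : ℕ) (M N : Matrix (Fin m) (Fin n) ℝ) :
    (inner ℝ (matE m n M) (matE m n N) : ℝ) = Matrix.trace (Mᵀ * N) := by
  rw [trace_tmul]
  simp [PiLp.inner_apply, matE]
  exact Finset.sum_congr rfl fun p _ => mul_comm _ _

theorem stmt_19 (m n : ℕ) (A : Matrix (Fin m) (Fin n) ℝ) :
    (∀ X : Matrix (Fin m) (Fin n) ℝ,
      (∀ K : Matrix (Fin m) (Fin m) ℝ, Kᵀ = -K →
        Matrix.trace ((K * A)ᵀ * X) = 0) ↔ (X * Aᵀ).IsSymm) ∧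
    (∀ X : Matrix (Fin m) (Fin n) ℝ,
      (∀ L : Matrix (Fin n) (Fin n) ℝ, Lᵀ = -L →
        Matrix.trace ((A * L)ᵀ * X) = 0) ↔ (Aᵀ * X).IsSymm) ∧
    (HasSSVP A ↔
      ∀ M : Matrix (Fin m) (Fin n) ℝ,
        ∃ (K : Matrix (Fin m) (Fin m) ℝ) (L : Matrix (Fin n) (Fin n) ℝ)
          (R : Matrix (Fin m) (Fin n) ℝ),
          Kᵀ = -K ∧ Lᵀ = -L ∧ (∀ i j, A i j = 0 → R i j = 0) ∧
          M = K * A + A * L + R) := by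
  have keyA : ∀ (K : Matrix (Fin m) (Fin m) ℝ) (X : Matrix (Fin m) (Fin n) ℝ),
      Matrix.trace ((K * A)ᵀ * X) = Matrix.trace (Kᵀ * (X * Aᵀ)) := by
    intro K X
    rw [transpose_mul, Matrix.mul_assoc, Matrix.trace_mul_comm, Matrix.mul_assoc]
  have keyB : ∀ (L : Matrix (Fin n) (Fin n) ℝ) (X : Matrix (Fin m) (Fin n) ℝ),
      Matrix.trace ((A * L)ᵀ * X) = Matrix.trace (Lᵀ * (Aᵀ * X)) := by
    intro L X
    rw [transpose_mul, Matrix.mul_assoc]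
  have parta : ∀ X : Matrix (Fin m) (Fin n) ℝ,
      (∀ K : Matrix (Fin m) (Fin m) ℝ, Kᵀ = -K →
        Matrix.trace ((K * A)ᵀ * X) = 0) ↔ (X * Aᵀ).IsSymm := by
    intro X
    simp_rw [keyA]
    exact skew_pairing _
  have partb : ∀ X : Matrix (Fin m) (Fin n) ℝ,
      (∀ L : Matrix (Fin n) (Fin n) ℝ, Lᵀ = -L →
        Matrix.trace ((A * L)ᵀ * X) = 0) ↔ (Aᵀ * X).IsSymm := by
    intro X
    simp_rw [keyB]
    exact skew_pairing _
  refine ⟨parta, partb, ?_⟩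
  -- the submodule of decomposable matrices
  set P : Submodule ℝ (Matrix (Fin m) (Fin n) ℝ) :=
    { carrier := {M | ∃ (K : Matrix (Fin m) (Fin m) ℝ) (L : Matrix (Fin n) (Fin n) ℝ)
          (R : Matrix (Fin m) (Fin n) ℝ),
          Kᵀ = -K ∧ Lᵀ = -L ∧ (∀ i j, A i j = 0 → R i j = 0) ∧
          M = K * A + A * L + R}
      add_mem' := by
        rintro a b ⟨K1, L1, R1, hK1, hL1, hR1, rfl⟩ ⟨K2, L2, R2, hK2, hL2, hR2, rfl⟩
        refine ⟨K1 + K2, L1 + L2, R1 + R2, ?_, ?_, ?_, ?_⟩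
        · rw [transpose_add, hK1, hK2]; abel
        · rw [transpose_add, hL1, hL2]; abel
        · intro i j h
          rw [Matrix.add_apply, hR1 i j h, hR2 i j h, add_zero]
        · rw [Matrix.add_mul, Matrix.mul_add]; abel
      zero_mem' := ⟨0, 0, 0, by simp, by simp, fun _ _ _ => rfl, by simp⟩
      smul_mem' := by
        rintro c a ⟨K, L, R, hK, hL, hR, rfl⟩
        refine ⟨c • K, c • L, c • R, ?_, ?_, ?_, ?_⟩
        · rw [transpose_smul, hK, smul_neg]
        · rw [transpose_smul, hL, smul_neg]
        · intro i j h
          rw [Matrix.smul_apply, hR i j h, smul_zero]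
        · rw [smul_add, smul_add, Matrix.smul_mul, Matrix.mul_smul] } with hP
  have memP : ∀ M : Matrix (Fin m) (Fin n) ℝ, M ∈ P ↔
      ∃ (K : Matrix (Fin m) (Fin m) ℝ) (L : Matrix (Fin n) (Fin n) ℝ)
        (R : Matrix (Fin m) (Fin n) ℝ),
        Kᵀ = -K ∧ Lᵀ = -L ∧ (∀ i j, A i j = 0 → R i j = 0) ∧
        M = K * A + A * L + R := fun _ => Iff.rfl
  constructor
  · -- SSVP → decomposition
    intro hssvp M
    rw [← memP]
    have hbot : (P.map (matE m n).toLinearMap)ᗮ = ⊥ := by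
      rw [Submodule.eq_bot_iff]
      intro x hx
      set X := (matE m n).symm x with hXdef
      have hxX : matE m n X = x := (matE m n).apply_symm_apply x
      have htr : ∀ u ∈ P, Matrix.trace (uᵀ * X) = 0 := by
        intro u hu
        have h0 := (Submodule.mem_orthogonal _ _).mp hx (matE m n u)
          ⟨u, hu, rfl⟩
        rw [← hxX, inner_matE] at h0
        exact h0
      have h1 : (X * Aᵀ).IsSymm := by
        rw [← parta X]
        intro K hK
        exact htr (K * A) ⟨K, 0, 0, hK, by simp, fun _ _ _ => rfl, by simp⟩
      have h2 : (Aᵀ * X).IsSymm := by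
        rw [← partb X]
        intro L hL
        exact htr (A * L) ⟨0, L, 0, by simp, hL, fun _ _ _ => rfl, by simp⟩
      have h3 : ∀ i j, A i j ≠ 0 → X i j = 0 := by
        intro i j hij
        have hmem : (Matrix.single i j (1 : ℝ)) ∈ P := by
          refine ⟨0, 0, Matrix.single i j 1, by simp, by simp, ?_, by simp⟩
          intro i' j' h'
          have : ¬(i = i' ∧ j = j') := by
            rintro ⟨rfl, rfl⟩; exact hij h'
          simp [Matrix.single, this]
        have := htr _ hmem
        rw [trace_tmul] at this
        rw [← this]
        rw [Fintype.sum_prod_type]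
        simp [Matrix.single, ite_and, Finset.sum_ite_eq]
      have hX0 : X = 0 := hssvp X h1 h2 h3
      rw [← hxX, hX0, map_zero]
    have htop : (P.map (matE m n).toLinearMap) = ⊤ := by
      rw [← Submodule.orthogonal_eq_bot_iff]
      exact hbot
    have : matE m n M ∈ P.map (matE m n).toLinearMap := by
      rw [htop]; trivial
    obtain ⟨u, hu, he⟩ := this
    have : u = M := (matE m n).injective he
    rwa [this] at hu
  · -- decomposition → SSVP
    intro hdec X hs1 hs2 hsupp
    obtain ⟨K, L, R, hK, hL, hR, hM⟩ := hdec X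
    apply zero_of_tr
    have main : Matrix.trace ((K * A + A * L + R)ᵀ * X) = 0 := by
      simp only [transpose_add, Matrix.add_mul, Matrix.trace_add]
      have t1 : Matrix.trace ((K * A)ᵀ * X) = 0 := (parta X).mpr hs1 K hK
      have t2 : Matrix.trace ((A * L)ᵀ * X) = 0 := (partb X).mpr hs2 L hL
      have t3 : Matrix.trace (Rᵀ * X) = 0 := by
        rw [trace_tmul]
        apply Finset.sum_eq_zero
        intro p _
        by_cases h : A p.1 p.2 = 0
        · rw [hR _ _ h, zero_mul]
        · rw [hsupp _ _ h, mul_zero]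
      rw [t1, t2, t3]; ring
    calc Matrix.trace (Xᵀ * X) = Matrix.trace ((K * A + A * L + R)ᵀ * X) := by
          rw [← hM]
      _ = 0 := main
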